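/- Suppose g : ℕ⁺ → ℕ⁺ is a non-decreasing function with f(n) ≤ g(n) for all positive integers n, where f(n) is the greatest finite number of integer solutions of a subsystem of E_n. Then there is no polynomial W(x_1, x_2, x_3, …, x_m) with integer coefficients such that (i) for all non-negative integers x_1, x_2: g(x_1) = x_2 if and only if there exist x_3, …, x_m ∈ ℕ with W(x_1, x_2, x_3, …, x_m) = 0, and (ii) for all non-negative integers x_1, x_2, only finitely many tuples (x_3, …, x_m) ∈ ℕ^{m−2} satisfy W(x_1, x_2, x_3, …, x_m) = 0. -/

import Mathlib

/-- An equation of `E_n`: `x i = 1`, `x i + x j = x k`, or `x i * x j = x k`. -/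
inductive Eqn (n : ℕ) where
  | one : Fin n → Eqn n
  | add : Fin n → Fin n → Fin n → Eqn n
  | mul : Fin n → Fin n → Fin n → Eqn n

/-- A tuple satisfies an equation. -/
def Eqn.holds {n : ℕ} (x : Fin n → ℤ) : Eqn n → Prop
  | .one i => x i = 1
  | .add i j k => x i + x j = x k
  | .mul i j k => x i * x j = x k

/-- Integer solution set of a subsystem `S ⊆ E_n`. -/
def solSet {n : ℕ} (S : Set (Eqn n)) : Set (Fin n → ℤ) :=
  {x | ∀ e ∈ S, e.holds x}

/-- `f n`: the greatest finite number of integer solutions of a subsystem of `E_n`. -/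
noncomputable def f (n : ℕ) : ℕ :=
  sSup {r | ∃ S : Set (Eqn n), (solSet S).Finite ∧ (solSet S).ncard = r}

namespace NFF


/-- Arithmetic expression trees over `p` variables, with `1`, `+`, `*`. -/
inductive PExpr (p : ℕ) where
  | X : Fin p → PExpr p
  | one : PExpr p
  | add : PExpr p → PExpr p → PExpr p
  | mul : PExpr p → PExpr p → PExpr p

namespace PExpr

def eval {p : ℕ} (x : Fin p → ℤ) : PExpr p → ℤ
  | X i => x i
  | one => 1
  | add a b => a.eval x + b.eval x
  | mul a b => a.eval x * b.eval x

def csize {p : ℕ} : PExpr p → ℕ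
  | X _ => 0
  | one => 1
  | add a b => a.csize + b.csize + 1
  | mul a b => a.csize + b.csize + 1

def subst {p q : ℕ} (σ : Fin p → PExpr q) : PExpr p → PExpr q
  | X i => σ i
  | one => one
  | add a b => add (a.subst σ) (b.subst σ)
  | mul a b => mul (a.subst σ) (b.subst σ)

lemma eval_subst {p q : ℕ} (σ : Fin p → PExpr q) (e : PExpr p) (x : Fin q → ℤ) :
    (e.subst σ).eval x = e.eval (fun i => (σ i).eval x) := by
  induction e with
  | X i => rfl
  | one => rfl
  | add a b ha hb => simp [subst, eval, ha, hb]
  | mul a b ha hb => simp [subst, eval, ha, hb]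

lemma csize_subst_le {p q : ℕ} (σ : Fin p → PExpr q) (S : ℕ)
    (hS : ∀ i, (σ i).csize ≤ S) (e : PExpr p) :
    (e.subst σ).csize ≤ (2 * e.csize + 1) * (S + 1) := by
  induction e with
  | X i => simpa [subst, csize] using (hS i).trans (by nlinarith)
  | one => simp [subst, csize]; nlinarith
  | add a b ha hb => simp only [subst, csize]; nlinarith
  | mul a b ha hb => simp only [subst, csize]; nlinarith

/-- expression with value `k+1`. -/
def natE (p : ℕ) : ℕ → PExpr p
  | 0 => one
  | k+1 => add one (natE p k)

lemma eval_natE (p : ℕ) (x : Fin p → ℤ) (k : ℕ) : (natE p k).eval x = k + 1 := by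
  induction k with
  | zero => rfl
  | succ k ih => simp [natE, eval, ih]; ring

/-- Every integer polynomial is a difference of two expression-tree values. -/
lemma exists_expr_diff {p : ℕ} (P : MvPolynomial (Fin p) ℤ) :
    ∃ e₁ e₂ : PExpr p, ∀ x : Fin p → ℤ,
      e₁.eval x - e₂.eval x = MvPolynomial.eval x P := by
  induction P using MvPolynomial.induction_on with
  | C a =>
    rcases le_or_gt 0 a with h | h
    · refine ⟨natE p a.toNat, one, fun x => ?_⟩
      simp [eval_natE, eval, Int.toNat_of_nonneg h]
    · refine ⟨one, natE p (-a).toNat, fun x => ?_⟩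
      simp [eval_natE, eval]
      omega
  | add P Q hP hQ =>
    obtain ⟨p₁, p₂, hp⟩ := hP
    obtain ⟨q₁, q₂, hq⟩ := hQ
    refine ⟨add p₁ q₁, add p₂ q₂, fun x => ?_⟩
    simp [eval]
    rw [← hp x, ← hq x]; ring
  | mul_X P i hP =>
    obtain ⟨p₁, p₂, hp⟩ := hP
    refine ⟨mul p₁ (X i), mul p₂ (X i), fun x => ?_⟩
    simp [eval]
    rw [← hp x]; ring

end PExpr



inductive Ref (p : ℕ) where
  | inp : Fin p → Ref p
  | cell : ℕ → Ref p

inductive Ins (p : ℕ) where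
  | one : Ins p
  | add : Ref p → Ref p → Ins p
  | mul : Ref p → Ref p → Ins p

def evalRef {p : ℕ} (x : Fin p → ℤ) (vs : List ℤ) : Ref p → ℤ
  | .inp i => x i
  | .cell k => vs.getD k 0

def evalIns {p : ℕ} (x : Fin p → ℤ) (vs : List ℤ) : Ins p → ℤ
  | .one => 1
  | .add a b => evalRef x vs a + evalRef x vs b
  | .mul a b => evalRef x vs a * evalRef x vs b

def run {p : ℕ} (x : Fin p → ℤ) (L : List (Ins p)) : List ℤ :=
  L.foldl (fun vs i => vs ++ [evalIns x vs i]) []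

def RefOk {p : ℕ} (k : ℕ) : Ref p → Prop
  | .inp _ => True
  | .cell j => j < k

def InsOk {p : ℕ} (k : ℕ) : Ins p → Prop
  | .one => True
  | .add a b => RefOk k a ∧ RefOk k b
  | .mul a b => RefOk k a ∧ RefOk k b

def ProgOk {p : ℕ} (L : List (Ins p)) : Prop :=
  ∀ k (h : k < L.length), InsOk k L[k]

lemma RefOk.mono {p : ℕ} {k k' : ℕ} {r : Ref p} (h : RefOk k r) (hk : k ≤ k') : RefOk k' r := by
  cases r with
  | inp i => trivial
  | cell j => exact lt_of_lt_of_le h hk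

lemma InsOk.mono {p : ℕ} {k k' : ℕ} {i : Ins p} (h : InsOk k i) (hk : k ≤ k') : InsOk k' i := by
  cases i with
  | one => trivial
  | add a b => exact ⟨h.1.mono hk, h.2.mono hk⟩
  | mul a b => exact ⟨h.1.mono hk, h.2.mono hk⟩

lemma foldl_exists_append {p : ℕ} (x : Fin p → ℤ) :
    ∀ (M : List (Ins p)) (vs : List ℤ), ∃ T,
      M.foldl (fun vs i => vs ++ [evalIns x vs i]) vs = vs ++ T := by
  intro M
  induction M with
  | nil => exact fun vs => ⟨[], by simp⟩
  | cons i M ih =>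
    intro vs
    obtain ⟨T, hT⟩ := ih (vs ++ [evalIns x vs i])
    exact ⟨[evalIns x vs i] ++ T, by simp [List.foldl_cons, hT]⟩

lemma run_append {p : ℕ} (x : Fin p → ℤ) (L M : List (Ins p)) :
    ∃ T, run x (L ++ M) = run x L ++ T := by
  rw [run, List.foldl_append]
  exact foldl_exists_append x M (run x L)

lemma length_run {p : ℕ} (x : Fin p → ℤ) (L : List (Ins p)) :
    (run x L).length = L.length := by
  suffices h : ∀ (M : List (Ins p)) (vs : List ℤ),
      (M.foldl (fun vs i => vs ++ [evalIns x vs i]) vs).length = vs.length + M.length by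
    simpa [run] using h L []
  intro M
  induction M with
  | nil => simp
  | cons i M ih => intro vs; simp [ih]; omega

lemma run_getD_stable {p : ℕ} (x : Fin p → ℤ) (L M : List (Ins p)) {k : ℕ}
    (hk : k < L.length) : (run x (L ++ M)).getD k 0 = (run x L).getD k 0 := by
  obtain ⟨T, hT⟩ := run_append x L M
  rw [hT, List.getD_append]
  rw [length_run]; exact hk

lemma evalRef_stable {p : ℕ} (x : Fin p → ℤ) (L M : List (Ins p)) {r : Ref p}
    (hr : RefOk L.length r) : evalRef x (run x (L ++ M)) r = evalRef x (run x L) r := by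
  cases r with
  | inp i => rfl
  | cell j => exact run_getD_stable x L M hr

lemma evalIns_stable {p : ℕ} (x : Fin p → ℤ) (L M : List (Ins p)) {i : Ins p}
    (hi : InsOk L.length i) : evalIns x (run x (L ++ M)) i = evalIns x (run x L) i := by
  cases i with
  | one => rfl
  | add a b => simp [evalIns, evalRef_stable x L M hi.1, evalRef_stable x L M hi.2]
  | mul a b => simp [evalIns, evalRef_stable x L M hi.1, evalRef_stable x L M hi.2]

lemma run_concat {p : ℕ} (x : Fin p → ℤ) (L : List (Ins p)) (i : Ins p) :
    run x (L ++ [i]) = run x L ++ [evalIns x (run x L) i] := by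
  rw [run, List.foldl_append]; rfl

lemma getD_concat {p : ℕ} (x : Fin p → ℤ) (L : List (Ins p)) (i : Ins p) :
    (run x (L ++ [i])).getD L.length 0 = evalIns x (run x L) i := by
  rw [run_concat]
  have h : (run x L).length = L.length := length_run x L
  rw [List.getD_eq_getElem?_getD, List.getElem?_append_right (by omega)]
  simp [h]

/-- The value of cell `k` equals the evaluation of its instruction on the full run. -/
lemma run_cell_value {p : ℕ} (x : Fin p → ℤ) (L : List (Ins p)) (k : ℕ) (hk : k < L.length)
    (hok : InsOk k L[k]) :
    (run x L).getD k 0 = evalIns x (run x L) L[k] := by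
  obtain ⟨i, hi⟩ : ∃ i, L[k] = i := ⟨_, rfl⟩
  rw [hi] at hok ⊢
  have hsplit : L = (L.take k ++ [i]) ++ L.drop (k+1) := by
    conv_lhs => rw [← List.take_append_drop (k+1) L]
    rw [List.take_succ]
    simp [List.getElem?_eq_getElem hk, hi]
  have hlen : (L.take k).length = k := by simp; omega
  calc (run x L).getD k 0
      = (run x ((L.take k ++ [i]) ++ L.drop (k+1))).getD k 0 := by rw [← hsplit]
    _ = (run x (L.take k ++ [i])).getD k 0 := by
        apply run_getD_stable; simp [hlen]
    _ = evalIns x (run x (L.take k)) i := by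
        have := getD_concat x (L.take k) i
        rwa [hlen] at this
    _ = evalIns x (run x L) i := by
        conv_rhs => rw [hsplit]
        rw [List.append_assoc]
        rw [evalIns_stable x (L.take k) _ (by rwa [hlen])]

lemma ProgOk.concat {p : ℕ} {L : List (Ins p)} (h : ProgOk L) {i : Ins p}
    (hi : InsOk L.length i) : ProgOk (L ++ [i]) := by
  intro k hk
  rcases lt_or_ge k L.length with h' | h'
  · rw [List.getElem_append_left h']; exact h k h'
  · have : k = L.length := by simp at hk; omega
    subst this
    rw [List.getElem_append_right (le_refl _)]
    simpa using hi

open PExpr in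
def compile {p : ℕ} : PExpr p → List (Ins p) → List (Ins p) × Ref p
  | .X i, L => (L, .inp i)
  | .one, L => (L ++ [.one], .cell L.length)
  | .add a b, L =>
    let c₁ := compile a L
    let c₂ := compile b c₁.1
    (c₂.1 ++ [.add c₁.2 c₂.2], .cell c₂.1.length)
  | .mul a b, L =>
    let c₁ := compile a L
    let c₂ := compile b c₁.1
    (c₂.1 ++ [.mul c₁.2 c₂.2], .cell c₂.1.length)

lemma compile_spec {p : ℕ} (e : PExpr p) (L : List (Ins p)) (hL : ProgOk L) :
    (∃ T, (compile e L).1 = L ++ T) ∧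
    (compile e L).1.length = L.length + e.csize ∧
    ProgOk (compile e L).1 ∧
    RefOk (compile e L).1.length (compile e L).2 ∧
    (∀ x, evalRef x (run x (compile e L).1) (compile e L).2 = e.eval x) := by
  induction e generalizing L with
  | X i =>
    exact ⟨⟨[], by simp [compile]⟩, by simp [compile, PExpr.csize], by simpa [compile] using hL,
      trivial, fun x => rfl⟩
  | one =>
    refine ⟨⟨[.one], rfl⟩, by simp [compile, PExpr.csize], ?_, ?_, fun x => ?_⟩
    · exact hL.concat trivial
    · simp [compile, RefOk]
    · show (run x (L ++ [.one])).getD L.length 0 = 1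
      rw [getD_concat]; rfl
  | add a b iha ihb =>
    obtain ⟨⟨T₁, hT₁⟩, hlen₁, hok₁, href₁, hval₁⟩ := iha L hL
    obtain ⟨⟨T₂, hT₂⟩, hlen₂, hok₂, href₂, hval₂⟩ := ihb (compile a L).1 hok₁
    have hle : (compile a L).1.length ≤ (compile b (compile a L).1).1.length := by
      rw [hT₂]; simp
    refine ⟨⟨T₁ ++ T₂ ++ [.add (compile a L).2 (compile b (compile a L).1).2], by
        show (compile b (compile a L).1).1 ++ [_] = _
        rw [hT₂, hT₁]; simp⟩, by simp [compile, hlen₂, hlen₁, PExpr.csize]; ring, ?_, ?_, fun x => ?_⟩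
    · exact hok₂.concat ⟨href₁.mono hle, href₂⟩
    · simp [compile, RefOk]
    · show (run x ((compile b (compile a L).1).1 ++ [_])).getD (compile b (compile a L).1).1.length 0 = _
      rw [getD_concat]
      show evalRef x _ _ + evalRef x _ _ = _
      rw [hval₂ x]
      rw [hT₂, evalRef_stable x _ _ href₁, hval₁ x]
      rfl
  | mul a b iha ihb =>
    obtain ⟨⟨T₁, hT₁⟩, hlen₁, hok₁, href₁, hval₁⟩ := iha L hL
    obtain ⟨⟨T₂, hT₂⟩, hlen₂, hok₂, href₂, hval₂⟩ := ihb (compile a L).1 hok₁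
    have hle : (compile a L).1.length ≤ (compile b (compile a L).1).1.length := by
      rw [hT₂]; simp
    refine ⟨⟨T₁ ++ T₂ ++ [.mul (compile a L).2 (compile b (compile a L).1).2], by
        show (compile b (compile a L).1).1 ++ [_] = _
        rw [hT₂, hT₁]; simp⟩, by simp [compile, hlen₂, hlen₁, PExpr.csize]; ring, ?_, ?_, fun x => ?_⟩
    · exact hok₂.concat ⟨href₁.mono hle, href₂⟩
    · simp [compile, RefOk]
    · show (run x ((compile b (compile a L).1).1 ++ [_])).getD (compile b (compile a L).1).1.length 0 = _
      rw [getD_concat]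
      show evalRef x _ _ * evalRef x _ _ = _
      rw [hval₂ x]
      rw [hT₂, evalRef_stable x _ _ href₁, hval₁ x]
      rfl


section System

def refIdx (p : ℕ) (L : List (Ins p)) (hL : 0 < L.length) : Ref p → Fin (p + L.length)
  | .inp i => Fin.castLE (Nat.le_add_right p L.length) i
  | .cell j => if h : j < L.length then ⟨p + j, by omega⟩ else ⟨p, by omega⟩

lemma refIdx_cell {p : ℕ} (L : List (Ins p)) (hL : 0 < L.length) {j : ℕ} (hj : j < L.length) :
    refIdx p L hL (.cell j) = ⟨p + j, by omega⟩ := by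
  simp [refIdx, hj]

def cellIdx (p : ℕ) (L : List (Ins p)) (k : ℕ) (hk : k < L.length) : Fin (p + L.length) :=
  ⟨p + k, by omega⟩

def insEqn (p : ℕ) (L : List (Ins p)) (hL : 0 < L.length) (ins : Ins p) (k : ℕ)
    (hk : k < L.length) : Eqn (p + L.length) :=
  match ins with
  | .one => .one (cellIdx p L k hk)
  | .add a b => .add (refIdx p L hL a) (refIdx p L hL b) (cellIdx p L k hk)
  | .mul a b => .mul (refIdx p L hL a) (refIdx p L hL b) (cellIdx p L k hk)

def extFun (p : ℕ) (L : List (Ins p)) (x : Fin p → ℤ) : Fin (p + L.length) → ℤ :=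
  fun idx => if h : (idx : ℕ) < p then x ⟨idx, h⟩ else (run x L).getD ((idx : ℕ) - p) 0

lemma extFun_inp (p : ℕ) (L : List (Ins p)) (x : Fin p → ℤ) (i : Fin p) :
    extFun p L x (Fin.castLE (Nat.le_add_right p L.length) i) = x i := by
  simp [extFun, i.isLt]

lemma extFun_cell (p : ℕ) (L : List (Ins p)) (x : Fin p → ℤ) (k : ℕ) (hk : k < L.length) :
    extFun p L x (cellIdx p L k hk) = (run x L).getD k 0 := by
  have h1 : ¬ (p + k < p) := by omega
  have h2 : p + k - p = k := by omega
  simp [extFun, cellIdx, h1, h2]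

lemma extFun_ref (p : ℕ) (L : List (Ins p)) (hL : 0 < L.length) (x : Fin p → ℤ) {r : Ref p}
    (hr : RefOk L.length r) :
    extFun p L x (refIdx p L hL r) = evalRef x (run x L) r := by
  cases r with
  | inp i => exact extFun_inp p L x i
  | cell j =>
    rw [refIdx_cell L hL hr]
    exact extFun_cell p L x j hr

lemma extFun_injective (p : ℕ) (L : List (Ins p)) : Function.Injective (extFun p L) := by
  intro x x' h
  funext i
  have := congrFun h (Fin.castLE (Nat.le_add_right p L.length) i)
  rwa [extFun_inp, extFun_inp] at this

theorem system_of_program (p : ℕ) (L : List (Ins p))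
    (hOk : ProgOk L) (h0len : 0 < L.length) (h0 : L[0] = Ins.one)
    (rA rB : Ref p) (hA : RefOk L.length rA) (hB : RefOk L.length rB) :
    ∃ S : Set (Eqn (p + L.length)),
      solSet S = (extFun p L) ''
        {x | evalRef x (run x L) rA = evalRef x (run x L) rB} := by
  classical
  refine ⟨{e | ∃ k, ∃ hk : k < L.length, e = insEqn p L h0len (L[k]'hk) k hk} ∪
    {Eqn.mul (refIdx p L h0len rA) (cellIdx p L 0 h0len) (refIdx p L h0len rB)}, ?_⟩
  have hget1 : ∀ (x : Fin p → ℤ), (run x L).getD 0 0 = 1 := by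
    intro x
    rw [run_cell_value x L 0 h0len (by rw [h0]; trivial), h0]
    rfl
  apply Set.Subset.antisymm
  · -- solutions are in the image
    rintro y hy
    set x : Fin p → ℤ := fun i => y (Fin.castLE (Nat.le_add_right p L.length) i) with hx
    have hcellv : ∀ k (hk : k < L.length), y (cellIdx p L k hk) = (run x L).getD k 0 := by
      intro k
      induction k using Nat.strong_induction_on with
      | _ k IH =>
        intro hk
        have hrefv : ∀ r, RefOk k r → y (refIdx p L h0len r) = evalRef x (run x L) r := by
          intro r hr
          cases r with
          | inp i => rfl
          | cell j =>
            have hjq : j < L.length := lt_trans hr hk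
            rw [refIdx_cell L h0len hjq]
            rw [show (⟨p + j, by omega⟩ : Fin (p + L.length)) = cellIdx p L j hjq from rfl]
            rw [IH j hr hjq]
            rfl
        have hh := hy (insEqn p L h0len (L[k]'hk) k hk) (Or.inl ⟨k, hk, rfl⟩)
        have hiok : InsOk k (L[k]'hk) := hOk k hk
        have hcv := run_cell_value x L k hk hiok
        obtain ⟨ins, hins⟩ : ∃ i, L[k]'hk = i := ⟨_, rfl⟩
        rw [hins] at hh hiok hcv
        cases ins with
        | one =>
          have : y (cellIdx p L k hk) = 1 := hh
          rw [this, hcv]; rfl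
        | add a b =>
          have : y (refIdx p L h0len a) + y (refIdx p L h0len b) = y (cellIdx p L k hk) := hh
          rw [← this, hcv, hrefv a hiok.1, hrefv b hiok.2]; rfl
        | mul a b =>
          have : y (refIdx p L h0len a) * y (refIdx p L h0len b) = y (cellIdx p L k hk) := hh
          rw [← this, hcv, hrefv a hiok.1, hrefv b hiok.2]; rfl
    have hrefq : ∀ r, RefOk L.length r → y (refIdx p L h0len r) = evalRef x (run x L) r := by
      intro r hr
      cases r with
      | inp i => rfl
      | cell j =>
        have hj : j < L.length := hr
        rw [refIdx_cell L h0len hj]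
        rw [show (⟨p + j, by omega⟩ : Fin (p + L.length)) = cellIdx p L j hj from rfl]
        rw [hcellv j hj]
        rfl
    refine ⟨x, ?_, ?_⟩
    · -- x satisfies the constraint
      have hh := hy (Eqn.mul (refIdx p L h0len rA) (cellIdx p L 0 h0len) (refIdx p L h0len rB))
        (Or.inr rfl)
      have h2 : y (refIdx p L h0len rA) * y (cellIdx p L 0 h0len)
          = y (refIdx p L h0len rB) := hh
      rw [hrefq rA hA, hrefq rB hB, hcellv 0 h0len, hget1 x] at h2
      simpa using h2
    · -- extFun x = y
      funext idx
      rcases lt_or_ge (idx : ℕ) p with h | h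
      · have h1 : extFun p L x idx = x ⟨idx, h⟩ := by simp [extFun, h]
        rw [h1, hx]
        show y (Fin.castLE (Nat.le_add_right p L.length) ⟨idx, h⟩) = y idx
        congr 1
      · have hk : (idx : ℕ) - p < L.length := by omega
        have hidx : idx = cellIdx p L ((idx : ℕ) - p) hk := Fin.ext (by simp [cellIdx]; omega)
        rw [hidx, extFun_cell, hcellv _ hk]
  · -- image is in the solution set
    rintro y ⟨x, hx, rfl⟩
    rintro e (⟨k, hk, rfl⟩ | he)
    · have hiok : InsOk k (L[k]'hk) := hOk k hk
      have hcv := run_cell_value x L k hk hiok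
      obtain ⟨ins, hins⟩ : ∃ i, L[k]'hk = i := ⟨_, rfl⟩
      rw [hins] at hiok hcv ⊢
      cases ins with
      | one =>
        show extFun p L x (cellIdx p L k hk) = 1
        rw [extFun_cell, hcv]; rfl
      | add a b =>
        show extFun p L x (refIdx p L h0len a) + extFun p L x (refIdx p L h0len b)
          = extFun p L x (cellIdx p L k hk)
        rw [extFun_cell, hcv, extFun_ref p L h0len x (hiok.1.mono hk.le),
          extFun_ref p L h0len x (hiok.2.mono hk.le)]
        rfl
      | mul a b =>
        show extFun p L x (refIdx p L h0len a) * extFun p L x (refIdx p L h0len b)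
          = extFun p L x (cellIdx p L k hk)
        rw [extFun_cell, hcv, extFun_ref p L h0len x (hiok.1.mono hk.le),
          extFun_ref p L h0len x (hiok.2.mono hk.le)]
        rfl
    · rw [Set.mem_singleton_iff] at he
      subst he
      show extFun p L x (refIdx p L h0len rA) * extFun p L x (cellIdx p L 0 h0len)
        = extFun p L x (refIdx p L h0len rB)
      rw [extFun_cell, hget1, extFun_ref p L h0len x hA, extFun_ref p L h0len x hB]
      simpa using hx

end System
section Gadgets

def sqE {p : ℕ} (e : PExpr p) : PExpr p := .mul e e

def p2p (p : ℕ) : ℕ → PExpr p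
  | 0 => .add .one .one
  | n+1 => sqE (p2p p n)

lemma eval_p2p (p : ℕ) (x : Fin p → ℤ) (n : ℕ) :
    (p2p p n).eval x = 2 ^ 2 ^ n := by
  induction n with
  | zero => simp [p2p, PExpr.eval]
  | succ n ih =>
    show (p2p p n).eval x * (p2p p n).eval x = _
    rw [ih, ← pow_add, pow_succ]
    ring_nf

lemma csize_p2p (p n : ℕ) : (p2p p n).csize < 4 * 2 ^ n := by
  induction n with
  | zero => simp [p2p, PExpr.csize]
  | succ n ih =>
    show (p2p p n).csize + (p2p p n).csize + 1 < _
    rw [pow_succ]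
    omega

def sq4 {p : ℕ} (i0 i1 i2 i3 : Fin p) : PExpr p :=
  .add (.add (sqE (.X i0)) (sqE (.X i1))) (.add (sqE (.X i2)) (sqE (.X i3)))

lemma eval_sq4 {p : ℕ} (x : Fin p → ℤ) (i0 i1 i2 i3 : Fin p) :
    (sq4 i0 i1 i2 i3).eval x = (x i0 * x i0 + x i1 * x i1) + (x i2 * x i2 + x i3 * x i3) := rfl

lemma csize_sq4 {p : ℕ} (i0 i1 i2 i3 : Fin p) : (sq4 i0 i1 i2 i3).csize = 7 := rfl

def vIdx (m : ℕ) (j : Fin m) (t : ℕ) (ht : t < 4) : Fin (4*m+8) :=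
  ⟨4*(j : ℕ)+t, by have := j.isLt; omega⟩

def aIdx (m : ℕ) (t : ℕ) (ht : t < 8) : Fin (4*m+8) := ⟨4*m+t, by omega⟩

def sigmaSub (m n : ℕ) : Fin (m+2) → PExpr (4*m+8) :=
  Fin.cons (p2p _ n) (Fin.cons
    (.add (sq4 (aIdx m 0 (by omega)) (aIdx m 1 (by omega)) (aIdx m 2 (by omega))
        (aIdx m 3 (by omega)))
      (sq4 (aIdx m 4 (by omega)) (aIdx m 5 (by omega)) (aIdx m 6 (by omega))
        (aIdx m 7 (by omega))))
    (fun j => sq4 (vIdx m j 0 (by omega)) (vIdx m j 1 (by omega)) (vIdx m j 2 (by omega))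
      (vIdx m j 3 (by omega))))

lemma csize_sigmaSub (m n : ℕ) (i : Fin (m+2)) :
    (sigmaSub m n i).csize ≤ 4 * 2 ^ n + 15 := by
  refine Fin.cases ?_ (fun i => ?_) i
  · simp only [sigmaSub, Fin.cons_zero]
    have := csize_p2p (4*m+8) n
    omega
  · refine Fin.cases ?_ (fun j => ?_) i
    · show (PExpr.add _ _).csize ≤ _
      show (7 + 7 + 1 : ℕ) ≤ _
      have : 1 ≤ 2 ^ n := Nat.one_le_two_pow
      omega
    · show (sq4 _ _ _ _).csize ≤ _
      rw [csize_sq4]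
      have : 1 ≤ 2 ^ n := Nat.one_le_two_pow
      omega

def v4val (m : ℕ) (x : Fin (4*m+8) → ℤ) (j : Fin m) : ℤ :=
  (x (vIdx m j 0 (by omega)) * x (vIdx m j 0 (by omega)) +
   x (vIdx m j 1 (by omega)) * x (vIdx m j 1 (by omega))) +
  (x (vIdx m j 2 (by omega)) * x (vIdx m j 2 (by omega)) +
   x (vIdx m j 3 (by omega)) * x (vIdx m j 3 (by omega)))

def s8val (m : ℕ) (x : Fin (4*m+8) → ℤ) : ℤ :=
  ((x (aIdx m 0 (by omega)) * x (aIdx m 0 (by omega)) +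
    x (aIdx m 1 (by omega)) * x (aIdx m 1 (by omega))) +
   (x (aIdx m 2 (by omega)) * x (aIdx m 2 (by omega)) +
    x (aIdx m 3 (by omega)) * x (aIdx m 3 (by omega)))) +
  ((x (aIdx m 4 (by omega)) * x (aIdx m 4 (by omega)) +
    x (aIdx m 5 (by omega)) * x (aIdx m 5 (by omega))) +
   (x (aIdx m 6 (by omega)) * x (aIdx m 6 (by omega)) +
    x (aIdx m 7 (by omega)) * x (aIdx m 7 (by omega))))

lemma sigmaSub_eval (m n : ℕ) (x : Fin (4*m+8) → ℤ) :
    (fun i => (sigmaSub m n i).eval x) =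
      Fin.cons ((2:ℤ) ^ 2 ^ n) (Fin.cons (s8val m x) (fun j => v4val m x j)) := by
  funext i
  refine Fin.cases ?_ (fun i => ?_) i
  · rw [show sigmaSub m n 0 = p2p _ n from rfl, eval_p2p, Fin.cons_zero]
  · rw [Fin.cons_succ]
    refine Fin.cases ?_ (fun j => ?_) i
    · rw [Fin.cons_zero]
      rfl
    · rw [Fin.cons_succ]
      rfl

end Gadgets

section FiniteEqn

def eqnEnc {n : ℕ} : Eqn n → (Fin n) ⊕ ((Fin n × Fin n × Fin n) ⊕ (Fin n × Fin n × Fin n))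
  | .one i => .inl i
  | .add i j k => .inr (.inl (i,j,k))
  | .mul i j k => .inr (.inr (i,j,k))

instance (n : ℕ) : Finite (Eqn n) := by
  apply Finite.of_injective eqnEnc
  rintro (⟨⟩|⟨⟩|⟨⟩) (⟨⟩|⟨⟩|⟨⟩) h <;> simp_all [eqnEnc]

lemma ncard_le_f {n : ℕ} (S : Set (Eqn n)) (hfin : (solSet S).Finite) :
    (solSet S).ncard ≤ f n := by
  apply le_csSup
  · have hsub : {r | ∃ S : Set (Eqn n), (solSet S).Finite ∧ (solSet S).ncard = r}
        ⊆ Set.range (fun S : Set (Eqn n) => (solSet S).ncard) := by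
      rintro r ⟨S, _, h⟩; exact ⟨S, h⟩
    exact ((Set.finite_range _).subset hsub).bddAbove
  · exact ⟨S, hfin, rfl⟩

end FiniteEqn

lemma two_mul_le_two_pow : ∀ n : ℕ, 2 * n ≤ 2 ^ n := by
  intro n
  induction n with
  | zero => norm_num
  | succ n ih =>
    match n, ih with
    | 0, _ => norm_num
    | n+1, ih =>
      have h2 : 2 ≤ 2 ^ (n+1) := Nat.one_lt_two_pow_iff.mpr (by omega)
      rw [pow_succ]
      omega

section Witness

def inpF (m : ℕ) (sel : ℕ → ℕ → ℕ) (vv : ℕ → ℕ) (y z : ℕ) : Fin (4*m+8) → ℤ :=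
  fun i => if (i:ℕ) < 4*m then (sel ((i:ℕ) % 4) (vv ((i:ℕ)/4)) : ℤ)
    else if (i:ℕ) < 4*m+4 then (sel ((i:ℕ) % 4) y : ℤ) else (sel ((i:ℕ) % 4) z : ℤ)

lemma inpF_vIdx (m : ℕ) (sel : ℕ → ℕ → ℕ) (vv : ℕ → ℕ) (y z : ℕ) (j : Fin m) (t : ℕ)
    (ht : t < 4) : inpF m sel vv y z (vIdx m j t ht) = (sel t (vv (j:ℕ)) : ℤ) := by
  have hco : ((vIdx m j t ht : Fin (4*m+8)) : ℕ) = 4*(j:ℕ)+t := rfl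
  have hj := j.isLt
  have hlt : 4*(j:ℕ)+t < 4*m := by omega
  have h1 : (4*(j:ℕ)+t) % 4 = t := by omega
  have h2 : (4*(j:ℕ)+t) / 4 = (j:ℕ) := by omega
  simp only [inpF, hco, if_pos hlt, h1, h2]

lemma inpF_aIdx1 (m : ℕ) (sel : ℕ → ℕ → ℕ) (vv : ℕ → ℕ) (y z : ℕ) (t : ℕ)
    (ht : t < 4) : inpF m sel vv y z (aIdx m t (by omega)) = (sel t y : ℤ) := by
  have hco : ((aIdx m t (by omega) : Fin (4*m+8)) : ℕ) = 4*m+t := rfl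
  have hn1 : ¬ (4*m+t < 4*m) := by omega
  have hlt : 4*m+t < 4*m+4 := by omega
  have h1 : (4*m+t) % 4 = t := by omega
  simp only [inpF, hco, if_neg hn1, if_pos hlt, h1]

lemma inpF_aIdx2 (m : ℕ) (sel : ℕ → ℕ → ℕ) (vv : ℕ → ℕ) (y z : ℕ) (t : ℕ)
    (ht1 : 4 ≤ t) (ht : t < 8) : inpF m sel vv y z (aIdx m t ht) = (sel (t-4) z : ℤ) := by
  have hco : ((aIdx m t ht : Fin (4*m+8)) : ℕ) = 4*m+t := rfl
  have hn1 : ¬ (4*m+t < 4*m) := by omega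
  have hn2 : ¬ (4*m+t < 4*m+4) := by omega
  have h1 : (4*m+t) % 4 = t - 4 := by omega
  simp only [inpF, hco, if_neg hn1, if_neg hn2, h1]

lemma v4val_inpF (m : ℕ) (sel : ℕ → ℕ → ℕ) (vv : ℕ → ℕ) (y z : ℕ) (j : Fin m)
    (hsel : ∀ w, (sel 0 w)^2 + (sel 1 w)^2 + (sel 2 w)^2 + (sel 3 w)^2 = w) :
    v4val m (inpF m sel vv y z) j = (vv (j:ℕ) : ℤ) := by
  unfold v4val
  rw [inpF_vIdx, inpF_vIdx, inpF_vIdx, inpF_vIdx]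
  conv_rhs => rw [← hsel (vv (j:ℕ))]
  push_cast
  ring

lemma s8val_inpF (m : ℕ) (sel : ℕ → ℕ → ℕ) (vv : ℕ → ℕ) (y z : ℕ)
    (hsel : ∀ w, (sel 0 w)^2 + (sel 1 w)^2 + (sel 2 w)^2 + (sel 3 w)^2 = w) :
    s8val m (inpF m sel vv y z) = (y : ℤ) + (z : ℤ) := by
  unfold s8val
  rw [inpF_aIdx1 m sel vv y z 0 (by omega), inpF_aIdx1 m sel vv y z 1 (by omega),
    inpF_aIdx1 m sel vv y z 2 (by omega), inpF_aIdx1 m sel vv y z 3 (by omega),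
    inpF_aIdx2 m sel vv y z 4 (by omega) (by omega), inpF_aIdx2 m sel vv y z 5 (by omega) (by omega),
    inpF_aIdx2 m sel vv y z 6 (by omega) (by omega), inpF_aIdx2 m sel vv y z 7 (by omega) (by omega)]
  conv_rhs => rw [← hsel y, ← hsel z]
  push_cast
  ring

lemma sq_le_v4val (m : ℕ) (x : Fin (4*m+8) → ℤ) (j : Fin m) (t : ℕ) (ht : t < 4) :
    x (vIdx m j t ht) * x (vIdx m j t ht) ≤ v4val m x j := by
  unfold v4val
  interval_cases t <;>
    nlinarith [mul_self_nonneg (x (vIdx m j 0 (by omega))),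
      mul_self_nonneg (x (vIdx m j 1 (by omega))), mul_self_nonneg (x (vIdx m j 2 (by omega))),
      mul_self_nonneg (x (vIdx m j 3 (by omega)))]

lemma sq_le_s8val (m : ℕ) (x : Fin (4*m+8) → ℤ) (t : ℕ) (ht : t < 8) :
    x (aIdx m t ht) * x (aIdx m t ht) ≤ s8val m x := by
  unfold s8val
  interval_cases t <;>
    nlinarith [mul_self_nonneg (x (aIdx m 0 (by omega))), mul_self_nonneg (x (aIdx m 1 (by omega))),
      mul_self_nonneg (x (aIdx m 2 (by omega))), mul_self_nonneg (x (aIdx m 3 (by omega))),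
      mul_self_nonneg (x (aIdx m 4 (by omega))), mul_self_nonneg (x (aIdx m 5 (by omega))),
      mul_self_nonneg (x (aIdx m 6 (by omega))), mul_self_nonneg (x (aIdx m 7 (by omega)))]

lemma s8val_nonneg (m : ℕ) (x : Fin (4*m+8) → ℤ) : 0 ≤ s8val m x := by
  unfold s8val
  nlinarith [mul_self_nonneg (x (aIdx m 0 (by omega))), mul_self_nonneg (x (aIdx m 1 (by omega))),
    mul_self_nonneg (x (aIdx m 2 (by omega))), mul_self_nonneg (x (aIdx m 3 (by omega))),
    mul_self_nonneg (x (aIdx m 4 (by omega))), mul_self_nonneg (x (aIdx m 5 (by omega))),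
    mul_self_nonneg (x (aIdx m 6 (by omega))), mul_self_nonneg (x (aIdx m 7 (by omega)))]

lemma v4val_nonneg (m : ℕ) (x : Fin (4*m+8) → ℤ) (j : Fin m) : 0 ≤ v4val m x j := by
  unfold v4val
  nlinarith [mul_self_nonneg (x (vIdx m j 0 (by omega))),
    mul_self_nonneg (x (vIdx m j 1 (by omega))), mul_self_nonneg (x (vIdx m j 2 (by omega))),
    mul_self_nonneg (x (vIdx m j 3 (by omega)))]

end Witness

lemma size_arith (a b m n : ℕ) (hn : 4*m+10+20*((2*a+1)+(2*b+1)) ≤ n) :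
    (4*m+8) + (1 + ((2*a+1) * ((4*2^n+15)+1) + (2*b+1) * ((4*2^n+15)+1))) ≤ 2^2^n := by
  have h1 : 1 ≤ 2^n := Nat.one_le_two_pow
  have h2 : n ≤ 2^n := (Nat.lt_two_pow_self (n := n)).le
  set c := (2*a+1) + (2*b+1) with hc
  have h3 : (2*a+1) * ((4*2^n+15)+1) + (2*b+1) * ((4*2^n+15)+1) = c * (4*2^n+16) := by
    rw [hc]; ring
  rw [h3]
  have h4 : c * (4*2^n+16) ≤ 20*c*2^n := by nlinarith
  have h5 : (4*m+8) + (1 + 20*c*2^n) ≤ (4*m+9+20*c) * 2^n := by nlinarith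
  have h6 : (4*m+9+20*c) * 2^n ≤ n * 2^n := by
    apply Nat.mul_le_mul_right
    omega
  have h7 : n * 2^n ≤ 2^n * 2^n := Nat.mul_le_mul_right _ h2
  have h8 : 2^n * 2^n = 2^(n+n) := (pow_add 2 n n).symm
  have h9 : (2:ℕ)^(n+n) ≤ 2^2^n := by
    apply Nat.pow_le_pow_right (by norm_num)
    have := two_mul_le_two_pow n
    omega
  omega

end NFF

set_option maxHeartbeats 1000000 in
open NFF in
theorem no_finite_fold_representation_of_majorant (g : ℕ → ℕ)
    (hgpos : ∀ n, 0 < n → 0 < g n)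
    (hgmono : ∀ m n, 0 < m → m ≤ n → g m ≤ g n)
    (hmaj : ∀ n, 0 < n → f n ≤ g n) :
    ¬ ∃ (m : ℕ) (W : MvPolynomial (Fin (m + 2)) ℤ),
      (∀ x1 x2 : ℕ, (0 < x1 ∧ g x1 = x2) ↔
        ∃ v : Fin m → ℕ,
          MvPolynomial.eval
            (Fin.cons (x1 : ℤ) (Fin.cons (x2 : ℤ) (fun j => (v j : ℤ)))) W = 0) ∧
      (∀ x1 x2 : ℕ,
        {v : Fin m → ℕ |
          MvPolynomial.eval
            (Fin.cons (x1 : ℤ) (Fin.cons (x2 : ℤ) (fun j => (v j : ℤ)))) W = 0}.Finite) := by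
  rintro ⟨m, W, hi, hii⟩
  obtain ⟨e₁, e₂, hdiff⟩ := PExpr.exists_expr_diff W
  obtain ⟨n, hn⟩ : ∃ n : ℕ, n = 4*m+10+20*((2*e₁.csize+1)+(2*e₂.csize+1)) := ⟨_, rfl⟩
  set A : PExpr (4*m+8) := e₁.subst (sigmaSub m n) with hA
  set B : PExpr (4*m+8) := e₂.subst (sigmaSub m n) with hB
  set L0 : List (Ins (4*m+8)) := [Ins.one] with hL0
  have hok0 : ProgOk L0 := by
    intro k hk
    rcases k with _ | k
    · trivial
    · exact absurd hk (by simp [hL0])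
  obtain ⟨⟨T₁, hT₁⟩, hlen₁, hok₁, href₁, hval₁⟩ := compile_spec A L0 hok0
  obtain ⟨⟨T₂, hT₂⟩, hlen₂, hok₂, href₂, hval₂⟩ := compile_spec B (compile A L0).1 hok₁
  set L₂ : List (Ins (4*m+8)) := (compile B (compile A L0).1).1 with hL₂def
  have hL0len : L0.length = 1 := by simp [hL0]
  have hlen : L₂.length = 1 + A.csize + B.csize := by rw [hlen₂, hlen₁, hL0len]
  have h0len : 0 < L₂.length := by omega
  have hlenle : (compile A L0).1.length ≤ L₂.length := by rw [hT₂]; simp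
  have h0 : L₂[0] = Ins.one := by
    have e1 : L₂ = L0 ++ (T₁ ++ T₂) := by rw [hT₂, hT₁, List.append_assoc]
    rw [List.getElem_of_eq e1]
    rw [List.getElem_append_left (by simp [hL0])]
    simp [hL0]
  -- size bound
  obtain ⟨Knat, hKnatdef⟩ : ∃ K : ℕ, K = 2^2^n := ⟨_, rfl⟩
  have hKpos : 0 < Knat := by rw [hKnatdef]; positivity
  have hKcast : ((Knat : ℕ) : ℤ) = (2:ℤ)^2^n := by rw [hKnatdef]; push_cast; ring
  have hsA : A.csize ≤ (2*e₁.csize+1) * ((4*2^n+15)+1) :=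
    PExpr.csize_subst_le (sigmaSub m n) (4*2^n+15) (csize_sigmaSub m n) e₁
  have hsB : B.csize ≤ (2*e₂.csize+1) * ((4*2^n+15)+1) :=
    PExpr.csize_subst_le (sigmaSub m n) (4*2^n+15) (csize_sigmaSub m n) e₂
  have harith := size_arith e₁.csize e₂.csize m n (le_of_eq hn.symm)
  have hNK : (4*m+8) + L₂.length ≤ Knat := by
    rw [hKnatdef]
    have : L₂.length ≤ 1 + ((2*e₁.csize+1) * ((4*2^n+15)+1) + (2*e₂.csize+1) * ((4*2^n+15)+1)) := by
      omega
    omega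
  -- the constraint set
  set CS : Set (Fin (4*m+8) → ℤ) := {x | A.eval x = B.eval x} with hCSdef
  have hchar : ∀ x : Fin (4*m+8) → ℤ, x ∈ CS ↔
      MvPolynomial.eval
        (Fin.cons ((2:ℤ)^2^n) (Fin.cons (s8val m x) (fun j => v4val m x j))) W = 0 := by
    intro x
    have hmem : x ∈ CS ↔ A.eval x = B.eval x := Iff.rfl
    rw [hmem, hA, hB, PExpr.eval_subst, PExpr.eval_subst, sigmaSub_eval]
    constructor
    · intro h
      rw [← hdiff]
      exact sub_eq_zero_of_eq h
    · intro h
      rw [← hdiff] at h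
      exact sub_eq_zero.mp h
  -- the witness data
  obtain ⟨G, hG⟩ : ∃ G : ℕ, G = g Knat := ⟨_, rfl⟩
  obtain ⟨v₀, hv₀⟩ := (hi Knat G).mp ⟨hKpos, hG.symm⟩
  choose ra rb rc rd hr using Nat.sum_four_squares
  set sel : ℕ → ℕ → ℕ :=
    fun t w => if t = 0 then ra w else if t = 1 then rb w else if t = 2 then rc w else rd w
    with hseldef
  have hsel : ∀ w, (sel 0 w)^2 + (sel 1 w)^2 + (sel 2 w)^2 + (sel 3 w)^2 = w := by
    intro w
    simp only [hseldef]
    norm_num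
    exact hr w
  set vv : ℕ → ℕ := fun k => if h : k < m then v₀ ⟨k, h⟩ else 0 with hvvdef
  have hvvj : ∀ j : Fin m, vv (j:ℕ) = v₀ j := by
    intro j
    simp [hvvdef, j.isLt]
  -- membership of the witnesses
  have hFmem : ∀ y : ℕ, y ≤ G → inpF m sel vv y (G - y) ∈ CS := by
    intro y hy
    rw [hchar]
    have h8 : s8val m (inpF m sel vv y (G-y)) = ((G:ℕ):ℤ) := by
      rw [s8val_inpF m sel vv y (G-y) hsel]
      push_cast [Nat.cast_sub hy]
      ring
    have h4 : (fun j => v4val m (inpF m sel vv y (G-y)) j)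
        = fun j : Fin m => ((v₀ j : ℕ) : ℤ) :=
      funext fun j => by rw [v4val_inpF m sel vv _ _ j hsel, hvvj j]
    rw [h8, h4, ← hKcast]
    exact hv₀
  -- injectivity of the witness family
  have hkey : ∀ w w' : ℕ, inpF m sel vv w (G-w) = inpF m sel vv w' (G-w') → w = w' := by
    intro w w' hww
    have h0' := congrFun hww (aIdx m 0 (by omega))
    have h1' := congrFun hww (aIdx m 1 (by omega))
    have h2' := congrFun hww (aIdx m 2 (by omega))
    have h3' := congrFun hww (aIdx m 3 (by omega))
    rw [inpF_aIdx1 m sel vv w (G-w) 0 (by omega),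
      inpF_aIdx1 m sel vv w' (G-w') 0 (by omega)] at h0'
    rw [inpF_aIdx1 m sel vv w (G-w) 1 (by omega),
      inpF_aIdx1 m sel vv w' (G-w') 1 (by omega)] at h1'
    rw [inpF_aIdx1 m sel vv w (G-w) 2 (by omega),
      inpF_aIdx1 m sel vv w' (G-w') 2 (by omega)] at h2'
    rw [inpF_aIdx1 m sel vv w (G-w) 3 (by omega),
      inpF_aIdx1 m sel vv w' (G-w') 3 (by omega)] at h3'
    have e0 : sel 0 w = sel 0 w' := by exact_mod_cast h0'
    have e1 : sel 1 w = sel 1 w' := by exact_mod_cast h1'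
    have e2 : sel 2 w = sel 2 w' := by exact_mod_cast h2'
    have e3 : sel 3 w = sel 3 w' := by exact_mod_cast h3'
    rw [← hsel w, ← hsel w', e0, e1, e2, e3]
  -- finiteness of the constraint set
  have hCSfin : CS.Finite := by
    have Vfin := hii Knat G
    obtain ⟨M, hM⟩ := (Vfin.image (fun v : Fin m → ℕ => Finset.univ.sup v)).bddAbove
    have hbound : ∀ x ∈ CS, ∀ i : Fin (4*m+8),
        x i ∈ Set.Icc (-((M:ℤ)+G)) ((M:ℤ)+G) := by
      intro x hx i
      have heval := (hchar x).mp hx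
      have h8n := s8val_nonneg m x
      have h4n := fun j => v4val_nonneg m x j
      set x2nat : ℕ := (s8val m x).toNat with hx2
      set vnat : Fin m → ℕ := fun j => (v4val m x j).toNat with hvnat
      have hc8 : ((x2nat : ℕ) : ℤ) = s8val m x := Int.toNat_of_nonneg h8n
      have hc4 : ∀ j, ((vnat j : ℕ) : ℤ) = v4val m x j := fun j => Int.toNat_of_nonneg (h4n j)
      have heval' : MvPolynomial.eval
          (Fin.cons ((Knat:ℤ)) (Fin.cons ((x2nat:ℤ)) (fun j => ((vnat j : ℕ):ℤ)))) W = 0 := by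
        have hfn : (fun j : Fin m => ((vnat j : ℕ):ℤ)) = fun j => v4val m x j := funext hc4
        rw [hKcast, hc8, hfn]
        exact heval
      have hgx : g Knat = x2nat := ((hi Knat x2nat).mpr ⟨vnat, heval'⟩).2
      have hx2G : x2nat = G := by omega
      have hvmem : vnat ∈ {v : Fin m → ℕ |
          MvPolynomial.eval (Fin.cons (↑Knat) (Fin.cons (↑G) (fun j => (v j : ℤ)))) W = 0} := by
        show MvPolynomial.eval _ W = 0
        rw [← hx2G]
        exact heval'
      have hsup : ∀ j, vnat j ≤ M := fun j =>
        le_trans (Finset.le_sup (Finset.mem_univ j)) (hM (Set.mem_image_of_mem _ hvmem))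
      have hGnn : (0:ℤ) ≤ (G:ℤ) := Int.natCast_nonneg _
      have hMnn : (0:ℤ) ≤ (M:ℤ) := Int.natCast_nonneg _
      have hsq : x i * x i ≤ (M:ℤ) + G := by
        rcases lt_or_ge (i:ℕ) (4*m) with hc | hc
        · have hjlt : (i:ℕ)/4 < m := by omega
          have ht : (i:ℕ) % 4 < 4 := by omega
          have hieq : i = vIdx m ⟨(i:ℕ)/4, hjlt⟩ ((i:ℕ)%4) ht := by
            apply Fin.ext
            show (i:ℕ) = 4*((i:ℕ)/4) + (i:ℕ)%4
            omega
          have hle1 : x i * x i ≤ v4val m x ⟨(i:ℕ)/4, hjlt⟩ := by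
            have hxx : x i = x (vIdx m ⟨(i:ℕ)/4, hjlt⟩ ((i:ℕ)%4) ht) := by rw [← hieq]
            rw [hxx]
            exact sq_le_v4val m x _ _ ht
          have hle2 : v4val m x ⟨(i:ℕ)/4, hjlt⟩ ≤ (M:ℤ) := by
            rw [← hc4 ⟨(i:ℕ)/4, hjlt⟩]
            exact_mod_cast hsup _
          linarith
        · have ht : (i:ℕ) - 4*m < 8 := by omega
          have hieq : i = aIdx m ((i:ℕ)-4*m) ht := by
            apply Fin.ext
            show (i:ℕ) = 4*m + ((i:ℕ)-4*m)
            omega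
          have hle1 : x i * x i ≤ s8val m x := by
            have hxx : x i = x (aIdx m ((i:ℕ)-4*m) ht) := by rw [← hieq]
            rw [hxx]
            exact sq_le_s8val m x _ ht
          have hle2 : s8val m x = (G:ℤ) := by
            rw [← hc8, hx2G]
          linarith
      constructor <;> nlinarith
    have hsub : CS ⊆ Set.pi Set.univ
        (fun _ : Fin (4*m+8) => Set.Icc (-((M:ℤ)+G)) ((M:ℤ)+G)) := by
      intro x hx i _
      exact hbound x hx i
    exact (Set.Finite.pi (fun i => Set.finite_Icc _ _)).subset hsub
  -- lower bound for the constraint set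
  have hlow : G + 1 ≤ CS.ncard := by
    set F : Fin (G+1) → (Fin (4*m+8) → ℤ) := fun y => inpF m sel vv (y:ℕ) (G - (y:ℕ)) with hF
    have hFinj : Function.Injective F := by
      intro y y' h
      exact Fin.ext (hkey (y:ℕ) (y':ℕ) h)
    have hrange : Set.range F ⊆ CS := by
      rintro _ ⟨y, rfl⟩
      exact hFmem (y:ℕ) (by omega)
    have h1 : (Set.range F).ncard = G + 1 := by
      rw [← Set.image_univ, Set.ncard_image_of_injective _ hFinj, Set.ncard_univ]
      simp
    rw [← h1]
    exact Set.ncard_le_ncard hrange hCSfin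
  -- the system
  obtain ⟨S, hS⟩ := system_of_program (4*m+8) L₂ hok₂ h0len h0
    (compile A L0).2 (compile B (compile A L0).1).2 (href₁.mono hlenle) href₂
  have hCSeq : {x : Fin (4*m+8) → ℤ |
      evalRef x (run x L₂) (compile A L0).2
        = evalRef x (run x L₂) (compile B (compile A L0).1).2} = CS := by
    ext x
    simp only [Set.mem_setOf_eq]
    have hstab : evalRef x (run x L₂) (compile A L0).2
        = evalRef x (run x (compile A L0).1) (compile A L0).2 := by
      rw [hT₂]
      exact evalRef_stable x _ T₂ href₁
    rw [hstab, hval₁ x, hval₂ x]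
    exact Iff.rfl
  rw [hCSeq] at hS
  have hfin : (solSet S).Finite := by
    rw [hS]
    exact hCSfin.image _
  have hnc : (solSet S).ncard = CS.ncard := by
    rw [hS]
    exact Set.ncard_image_of_injective _ (extFun_injective _ _)
  have c3 : (solSet S).ncard ≤ f ((4*m+8) + L₂.length) := ncard_le_f S hfin
  have c4 : f ((4*m+8) + L₂.length) ≤ g ((4*m+8) + L₂.length) := hmaj _ (by omega)
  have c5 : g ((4*m+8) + L₂.length) ≤ g Knat := hgmono _ _ (by omega) hNK
  omega
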